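/- Let K be a field with char K ≠ 2, n ≥ 2 and 1 ≤ i ≤ n/2. Write the standard basis of K^{2n} as e_1,…,e_n,f_1,…,f_n, so that ω(e_j,f_k) = δ_{jk} and ω(e_j,e_k) = ω(f_j,f_k) = 0. Let θ be the linear map acting as −1 on e_1,…,e_i,f_1,…,f_i and as +1 on the remaining basis vectors (the (I_{2n−2i}, −I_{2i})-homology). Then θ preserves ω, and the collineation it induces on C_{n,1}(K) has opposition diagram C_{n;i}^2; explicitly: (a) ω(x, θx) = 0 for all x ∈ K^{2n} (θ is point-domestic); (b) every totally isotropic subspace of dimension > 2i contains a nonzero θ-fixed vector, hence is not mapped to an opposite; (c) the subspace V = span{e_j + f_{n−j+1}, e_{n−j+1} + f_j : 1 ≤ j ≤ i} is totally isotropic of dimension 2i and V ∩ (θV)^⊥ = 0, i.e. θ maps V to an opposite. -/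
import Mathlib


/-!
STATEMENT 8: char K ≠ 2, n ≥ 2, 1 ≤ i ≤ n/2. The (I_{2n−2i}, −I_{2i})-homology θ acting
as −1 on e₁,…,e_i,f₁,…,f_i and +1 on the remaining basis vectors preserves ω and the
induced collineation of C_{n,1}(K) has opposition diagram C_{n;i}^2:
(a) θ is point-domestic; (b) every totally isotropic subspace of dimension > 2i contains
a nonzero θ-fixed vector, hence is not mapped to an opposite; (c) the totally isotropic
2i-dimensional subspace V = span{e_j + f_{n−j+1}, e_{n−j+1} + f_j : 1 ≤ j ≤ i} is mapped
to an opposite.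
-/

open Module Submodule

noncomputable section

/-- `K^{2n}`, written as pairs of `n`-tuples. -/
abbrev Vs (K : Type) (n : ℕ) : Type := (Fin n → K) × (Fin n → K)

/-- The standard symplectic form on `K^{2n}`: with `x = (x₁, x₂)`, `y = (y₁, y₂)`,
`ω(x,y) = ∑ⱼ (x₁ⱼ y₂ⱼ − x₂ⱼ y₁ⱼ)`; the basis vectors `e_j` and `f_j` below satisfy
`ω(e_j, f_k) = δ_{jk}` and `ω(e_j, e_k) = ω(f_j, f_k) = 0`. -/
def sform {K : Type} [Field K] {n : ℕ} (x y : Vs K n) : K :=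
  ∑ j, (x.1 j * y.2 j - x.2 j * y.1 j)

/-- The basis vector `e_j`. -/
def ee {K : Type} [Field K] {n : ℕ} (j : Fin n) : Vs K n := (Pi.single j 1, 0)

/-- The basis vector `f_j`. -/
def ff {K : Type} [Field K] {n : ℕ} (j : Fin n) : Vs K n := (0, Pi.single j 1)

/-- `U` is a totally isotropic subspace of `K^{2n}`. -/
def TotIso {K : Type} [Field K] {n : ℕ} (U : Submodule K (Vs K n)) : Prop :=
  ∀ x ∈ U, ∀ y ∈ U, sform x y = 0

/-- The collineation induced by `g` maps the totally isotropic subspace `U` to an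
opposite one, i.e. `U ∩ (gU)^⊥ = 0`. -/
def MapsToOpp {K : Type} [Field K] {n : ℕ} (g : Vs K n → Vs K n)
    (U : Submodule K (Vs K n)) : Prop :=
  ∀ v ∈ U, (∀ u ∈ U, sform v (g u) = 0) → v = 0

/-- The `(I_{2n−2i}, −I_{2i})`-homology: `−1` on `e₁, …, e_i, f₁, …, f_i` (0-indexed:
the first `i` coordinates of each half) and `+1` on the remaining basis vectors. -/
def homology (K : Type) [Field K] (n i : ℕ) : Vs K n → Vs K n :=
  fun x => (fun j => if (j : ℕ) < i then - x.1 j else x.1 j,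
            fun j => if (j : ℕ) < i then - x.2 j else x.2 j)

/-- The index `n − j + 1` (1-indexed), i.e. `n − 1 − j` in 0-indexed notation. -/
def partner {n : ℕ} (j : Fin n) : Fin n :=
  ⟨n - 1 - (j : ℕ), by have := j.isLt; omega⟩

/-- The generating set `{e_j + f_{n−j+1}, e_{n−j+1} + f_j : 1 ≤ j ≤ i}`. -/
def genSet (K : Type) [Field K] (n i : ℕ) : Set (Vs K n) :=
  {v | ∃ j : Fin n, (j : ℕ) < i ∧
        (v = ee j + ff (partner j) ∨ v = ee (partner j) + ff j)}

/-! ### Auxiliary lemmas -/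

section Aux

variable {K : Type} [Field K] {n : ℕ}

lemma fin_ne {a b : Fin n} (h : (a : ℕ) ≠ (b : ℕ)) : a ≠ b :=
  fun e => h (congrArg Fin.val e)

@[simp] lemma coe_partner (j : Fin n) : ((partner j : Fin n) : ℕ) = n - 1 - (j : ℕ) := rfl

lemma sform_add_left (x x' y : Vs K n) : sform (x + x') y = sform x y + sform x' y := by
  unfold sform
  rw [← Finset.sum_add_distrib]
  exact Finset.sum_congr rfl fun j _ => by
    simp only [Prod.fst_add, Prod.snd_add, Pi.add_apply]; ring

lemma sform_add_right (x y y' : Vs K n) : sform x (y + y') = sform x y + sform x y' := by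
  unfold sform
  rw [← Finset.sum_add_distrib]
  exact Finset.sum_congr rfl fun j _ => by
    simp only [Prod.fst_add, Prod.snd_add, Pi.add_apply]; ring

lemma sform_smul_left (c : K) (x y : Vs K n) : sform (c • x) y = c * sform x y := by
  unfold sform
  rw [Finset.mul_sum]
  exact Finset.sum_congr rfl fun j _ => by
    simp only [Prod.smul_fst, Prod.smul_snd, Pi.smul_apply, smul_eq_mul]; ring

lemma sform_smul_right (c : K) (x y : Vs K n) : sform x (c • y) = c * sform x y := by
  unfold sform
  rw [Finset.mul_sum]
  exact Finset.sum_congr rfl fun j _ => by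
    simp only [Prod.smul_fst, Prod.smul_snd, Pi.smul_apply, smul_eq_mul]; ring

lemma sform_zero_right (x : Vs K n) : sform x 0 = 0 := by
  unfold sform; simp

lemma sform_zero_left (y : Vs K n) : sform 0 y = 0 := by
  unfold sform; simp

lemma sform_neg_right (x y : Vs K n) : sform x (-y) = - sform x y := by
  have := sform_smul_right (-1 : K) x y
  simpa using this

lemma sform_ee_right (x : Vs K n) (c : Fin n) : sform x (ee c) = -(x.2 c) := by
  unfold sform ee
  simp [Pi.single_apply]

lemma sform_ff_right (x : Vs K n) (c : Fin n) : sform x (ff c) = x.1 c := by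
  unfold sform ff
  simp [Pi.single_apply]

lemma sform_ee_left (a : Fin n) (y : Vs K n) : sform (ee a) y = y.2 a := by
  unfold sform ee
  simp [Pi.single_apply]

lemma sform_ff_left (b : Fin n) (y : Vs K n) : sform (ff b) y = -(y.1 b) := by
  unfold sform ff
  simp [Pi.single_apply]

lemma sform_left_pair (a b : Fin n) (y : Vs K n) :
    sform (ee a + ff b) y = y.2 a - y.1 b := by
  rw [sform_add_left, sform_ee_left, sform_ff_left]; ring

/-- total isotropy transfers from generators to the span. -/
lemma totIso_span (S : Set (Vs K n)) (h : ∀ x ∈ S, ∀ y ∈ S, sform x y = 0) :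
    TotIso (span K S) := by
  intro x hx y hy
  have h1 : ∀ a ∈ S, sform a y = 0 := by
    intro a ha
    refine Submodule.span_induction (p := fun z _ => sform a z = 0)
      (fun b hb => h a ha b hb) (sform_zero_right a) ?_ ?_ hy
    · intro b c _ _ hb hc
      rw [sform_add_right, hb, hc, add_zero]
    · intro t b _ hb
      rw [sform_smul_right, hb, mul_zero]
  refine Submodule.span_induction (p := fun z _ => sform z y = 0)
    h1 (sform_zero_left y) ?_ ?_ hx
  · intro b c _ _ hb hc
    rw [sform_add_left, hb, hc, add_zero]
  · intro t b _ hb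
    rw [sform_smul_left, hb, mul_zero]

/-- The projection onto the first `i` coordinates of both halves. -/
def projL (K : Type) [Field K] (n i : ℕ) (h : i ≤ n) :
    Vs K n →ₗ[K] ((Fin i → K) × (Fin i → K)) where
  toFun x := (fun j => x.1 (Fin.castLE h j), fun j => x.2 (Fin.castLE h j))
  map_add' x y := rfl
  map_smul' c x := rfl

variable {i : ℕ}

lemma homology_sform (x y : Vs K n) :
    sform (homology K n i x) (homology K n i y) = sform x y := by
  unfold sform homology
  refine Finset.sum_congr rfl fun j _ => ?_
  by_cases h : (j : ℕ) < i
  · simp only [if_pos h]; ring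
  · simp only [if_neg h]

lemma homology_homology (x : Vs K n) :
    homology K n i (homology K n i x) = x := by
  unfold homology
  refine Prod.ext ?_ ?_ <;> funext m <;>
    (by_cases h : (m : ℕ) < i
     · simp only [if_pos h, neg_neg]
     · simp only [if_neg h])

lemma homology_pair1 (j b : Fin n) (hj : (j : ℕ) < i) (hb : i ≤ (b : ℕ)) :
    homology K n i (ee j + ff b) = (-(ee j)) + ff b := by
  unfold homology ee ff
  refine Prod.ext ?_ ?_ <;> funext m <;>
    simp only [Prod.fst_add, Prod.snd_add, Prod.fst_neg, Prod.snd_neg, Pi.add_apply,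
      Pi.neg_apply, Pi.zero_apply, add_zero, zero_add, neg_zero]
  · by_cases h : (m : ℕ) < i
    · simp only [if_pos h]
    · simp only [if_neg h]
      rw [Pi.single_eq_of_ne (fin_ne (by omega)) 1]
      simp
  · by_cases h : (m : ℕ) < i
    · simp only [if_pos h]
      rw [Pi.single_eq_of_ne (fin_ne (by omega)) 1]
      simp
    · simp only [if_neg h]

lemma homology_pair2 (j b : Fin n) (hj : (j : ℕ) < i) (hb : i ≤ (b : ℕ)) :
    homology K n i (ee b + ff j) = ee b + (-(ff j)) := by
  unfold homology ee ff
  refine Prod.ext ?_ ?_ <;> funext m <;>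
    simp only [Prod.fst_add, Prod.snd_add, Prod.fst_neg, Prod.snd_neg, Pi.add_apply,
      Pi.neg_apply, Pi.zero_apply, add_zero, zero_add, neg_zero]
  · by_cases h : (m : ℕ) < i
    · simp only [if_pos h]
      rw [Pi.single_eq_of_ne (fin_ne (by omega)) 1]
      simp
    · simp only [if_neg h]
  · by_cases h : (m : ℕ) < i
    · simp only [if_pos h]
    · simp only [if_neg h]
      rw [Pi.single_eq_of_ne (fin_ne (by omega)) 1]
      simp

end Aux

theorem homology_has_diagram_Cni2
    {K : Type} [Field K] {n i : ℕ}
    (hchar : (2 : K) ≠ 0) (hn : 2 ≤ n) (hi1 : 1 ≤ i) (hi2 : 2 * i ≤ n) :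
    -- θ preserves ω
    (∀ x y : Vs K n, sform (homology K n i x) (homology K n i y) = sform x y) ∧
    -- (a) θ is point-domestic
    (∀ x : Vs K n, sform x (homology K n i x) = 0) ∧
    -- (b) every totally isotropic subspace of dimension > 2i contains a nonzero fixed
    -- vector, hence is not mapped to an opposite
    (∀ U : Submodule K (Vs K n), TotIso U → 2 * i < finrank K U →
      (∃ v ∈ U, v ≠ 0 ∧ homology K n i v = v) ∧ ¬ MapsToOpp (homology K n i) U) ∧
    -- (c) the subspace V is totally isotropic of dimension 2i and is mapped to an
    -- opposite
    (TotIso (span K (genSet K n i)) ∧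
      finrank K ↥(span K (genSet K n i)) = 2 * i ∧
      MapsToOpp (homology K n i) (span K (genSet K n i))) := by
  have hin : i ≤ n := by omega
  -- basic partner facts
  have hpge : ∀ j : Fin n, (j : ℕ) < i → i ≤ ((partner j : Fin n) : ℕ) := by
    intro j hj; simp only [coe_partner]; omega
  have hpp : ∀ j k : Fin n, partner j = partner k ↔ j = k := by
    intro j k
    constructor
    · intro h
      have := congrArg Fin.val h
      simp only [coe_partner] at this
      have hj := j.isLt; have hk := k.isLt
      exact Fin.ext (by omega)
    · intro h; rw [h]
  refine ⟨homology_sform, ?_, ?_, ?_, ?_, ?_⟩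
  · -- (a) point-domestic
    intro x
    unfold sform homology
    refine Finset.sum_eq_zero fun j _ => ?_
    by_cases h : (j : ℕ) < i
    · simp only [if_pos h]; ring
    · simp only [if_neg h]; ring
  · -- (b)
    intro U hIso hdim
    set L := (projL K n i hin).comp U.subtype with hLdef
    have hker : LinearMap.ker L ≠ ⊥ := by
      intro hbot
      have hinj : Function.Injective L := LinearMap.ker_eq_bot.mp hbot
      have hle := LinearMap.finrank_le_finrank_of_injective hinj
      have hcod : finrank K ((Fin i → K) × (Fin i → K)) = i + i := by simp
      rw [hcod] at hle
      omega
    obtain ⟨v, hvker, hvne⟩ := (Submodule.ne_bot_iff _).mp hker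
    have hv0 : (projL K n i hin) v.val = 0 := hvker
    have hcoord : ∀ j : Fin n, (j : ℕ) < i → v.val.1 j = 0 ∧ v.val.2 j = 0 := by
      intro j hj
      constructor
      · have := congrFun (congrArg Prod.fst hv0) ⟨(j : ℕ), hj⟩
        simpa [projL, Fin.castLE, Fin.eta] using this
      · have := congrFun (congrArg Prod.snd hv0) ⟨(j : ℕ), hj⟩
        simpa [projL, Fin.castLE, Fin.eta] using this
    have hfix : homology K n i v.val = v.val := by
      unfold homology
      refine Prod.ext ?_ ?_ <;> funext m <;>
        (by_cases h : (m : ℕ) < i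
         · simp only [if_pos h]
           first
           | (rw [(hcoord m h).1]; simp)
           | (rw [(hcoord m h).2]; simp)
         · simp only [if_neg h])
    have hvne' : v.val ≠ 0 := by
      intro h; exact hvne (Subtype.ext h)
    refine ⟨⟨v.val, v.2, hvne', hfix⟩, ?_⟩
    intro hM
    apply hvne'
    apply hM v.val v.2
    intro u hu
    rw [← hfix]
    rw [homology_sform]
    exact hIso v.val v.2 u hu
  · -- (c) total isotropy
    apply totIso_span
    rintro x ⟨j, hj, (rfl | rfl)⟩ y ⟨k, hk, (rfl | rfl)⟩ <;>
      rw [sform_left_pair] <;>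
      simp only [Prod.fst_add, Prod.snd_add, Pi.add_apply] <;>
      simp only [ee, ff, Pi.add_apply, Pi.zero_apply, add_zero, zero_add]
    · -- x = e_j + f_{pj}, y = e_k + f_{pk}
      rw [Pi.single_eq_of_ne (fin_ne (a := j) (b := partner k)
        (by have := hpge k hk; omega)) 1]
      rw [Pi.single_eq_of_ne (fin_ne (a := partner j) (b := k)
        (by have := hpge j hj; omega)) 1]
      ring
    · -- x = e_j + f_{pj}, y = e_{pk} + f_k
      by_cases hjk : j = k
      · subst hjk
        rw [Pi.single_eq_same, Pi.single_eq_same]; ring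
      · rw [Pi.single_eq_of_ne hjk 1,
          Pi.single_eq_of_ne (fun h => hjk ((hpp j k).mp h)) 1]
        ring
    · -- x = e_{pj} + f_j, y = e_k + f_{pk}
      by_cases hjk : j = k
      · subst hjk
        rw [Pi.single_eq_same, Pi.single_eq_same]; ring
      · rw [Pi.single_eq_of_ne (fun h => hjk ((hpp j k).mp h)) 1,
          Pi.single_eq_of_ne hjk 1]
        ring
    · -- x = e_{pj} + f_j, y = e_{pk} + f_k
      rw [Pi.single_eq_of_ne (fin_ne (a := partner j) (b := k)
        (by have := hpge j hj; omega)) 1]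
      rw [Pi.single_eq_of_ne (fin_ne (a := j) (b := partner k)
        (by have := hpge k hk; omega)) 1]
      ring
  · -- (c) dimension
    set b : Fin i ⊕ Fin i → Vs K n :=
      Sum.elim (fun j => ee (Fin.castLE hin j) + ff (partner (Fin.castLE hin j)))
        (fun j => ee (partner (Fin.castLE hin j)) + ff (Fin.castLE hin j)) with hb
    have hrange : Set.range b = genSet K n i := by
      ext v
      constructor
      · rintro ⟨(j | j), rfl⟩
        · exact ⟨Fin.castLE hin j, by simpa using j.isLt, Or.inl rfl⟩
        · exact ⟨Fin.castLE hin j, by simpa using j.isLt, Or.inr rfl⟩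
      · rintro ⟨j, hj, (rfl | rfl)⟩
        · exact ⟨Sum.inl ⟨(j : ℕ), hj⟩, rfl⟩
        · exact ⟨Sum.inr ⟨(j : ℕ), hj⟩, rfl⟩
    have hli : LinearIndependent K b := by
      apply LinearIndependent.of_comp (projL K n i hin)
      have heq : ⇑(projL K n i hin) ∘ b =
          ⇑((Pi.basisFun K (Fin i)).prod (Pi.basisFun K (Fin i))) := by
        funext l
        rcases l with j | j
        · refine Prod.ext ?_ ?_ <;> funext k <;>
            simp only [Function.comp_apply, hb, Sum.elim_inl, projL, LinearMap.coe_mk,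
              AddHom.coe_mk, Basis.prod_apply, LinearMap.coe_inl, LinearMap.coe_inr,
              Pi.basisFun_apply, Prod.fst_add, Prod.snd_add, ee, ff, Pi.add_apply,
              Pi.zero_apply, add_zero, zero_add]
          · by_cases hkj : k = j
            · subst hkj; rw [Pi.single_eq_same, Pi.single_eq_same]
            · rw [Pi.single_eq_of_ne (fun h => hkj (Fin.castLE_injective hin h)) 1,
                Pi.single_eq_of_ne hkj 1]
          · rw [Pi.single_eq_of_ne (fin_ne (by
              have h1 : ((Fin.castLE hin k : Fin n) : ℕ) = (k : ℕ) := rfl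
              have h2 : ((Fin.castLE hin j : Fin n) : ℕ) = (j : ℕ) := rfl
              have := k.isLt; have := j.isLt
              simp only [coe_partner, h1, h2]
              omega)) 1]
        · refine Prod.ext ?_ ?_ <;> funext k <;>
            simp only [Function.comp_apply, hb, Sum.elim_inr, projL, LinearMap.coe_mk,
              AddHom.coe_mk, Basis.prod_apply, LinearMap.coe_inl, LinearMap.coe_inr,
              Pi.basisFun_apply, Prod.fst_add, Prod.snd_add, ee, ff, Pi.add_apply,
              Pi.zero_apply, add_zero, zero_add]
          · rw [Pi.single_eq_of_ne (fin_ne (by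
              have h1 : ((Fin.castLE hin k : Fin n) : ℕ) = (k : ℕ) := rfl
              have h2 : ((Fin.castLE hin j : Fin n) : ℕ) = (j : ℕ) := rfl
              have := k.isLt; have := j.isLt
              simp only [coe_partner, h1, h2]
              omega)) 1]
          · by_cases hkj : k = j
            · subst hkj; rw [Pi.single_eq_same, Pi.single_eq_same]
            · rw [Pi.single_eq_of_ne (fun h => hkj (Fin.castLE_injective hin h)) 1,
                Pi.single_eq_of_ne hkj 1]
      rw [heq]
      exact ((Pi.basisFun K (Fin i)).prod (Pi.basisFun K (Fin i))).linearIndependent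
    rw [← hrange, finrank_span_eq_card hli]
    simp [Fintype.card_sum]
    omega
  · -- (c) maps to opposite
    intro v hv hall
    -- structural facts about elements of the span
    have key : ∀ v ∈ span K (genSet K n i),
        (∀ k : Fin n, (k : ℕ) < i →
          (v.1 k = v.2 (partner k) ∧ v.2 k = v.1 (partner k))) ∧
        (∀ m : Fin n, i ≤ (m : ℕ) → (m : ℕ) < n - i → v.1 m = 0 ∧ v.2 m = 0) := by
      intro w hw
      refine Submodule.span_induction ?_ ?_ ?_ ?_ hw
      · rintro x ⟨j, hj, (rfl | rfl)⟩ <;>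
          constructor <;> intro k hk
        · -- x = e_j + f_{pj}
          simp only [Prod.fst_add, Prod.snd_add, ee, ff, Pi.add_apply, Pi.zero_apply,
            add_zero, zero_add]
          constructor
          · by_cases hkj : k = j
            · subst hkj; rw [Pi.single_eq_same, Pi.single_eq_same]
            · rw [Pi.single_eq_of_ne hkj 1,
                Pi.single_eq_of_ne (fun h => hkj ((hpp k j).mp h)) 1]
          · rw [Pi.single_eq_of_ne (fin_ne (a := k) (b := partner j)
              (by have := hpge j hj; omega)) 1,
              Pi.single_eq_of_ne (fin_ne (a := partner k) (b := j)
              (by have := hpge k hk; omega)) 1]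
        · intro hk2
          simp only [Prod.fst_add, Prod.snd_add, ee, ff, Pi.add_apply, Pi.zero_apply,
            add_zero, zero_add]
          constructor
          · exact Pi.single_eq_of_ne (fin_ne (by omega)) 1
          · exact Pi.single_eq_of_ne (fin_ne (by
              have := hpge j hj; simp only [coe_partner] at *; omega)) 1
        · -- x = e_{pj} + f_j
          simp only [Prod.fst_add, Prod.snd_add, ee, ff, Pi.add_apply, Pi.zero_apply,
            add_zero, zero_add]
          constructor
          · rw [Pi.single_eq_of_ne (fin_ne (a := k) (b := partner j)
              (by have := hpge j hj; omega)) 1,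
              Pi.single_eq_of_ne (fin_ne (a := partner k) (b := j)
              (by have := hpge k hk; omega)) 1]
          · by_cases hkj : k = j
            · subst hkj; rw [Pi.single_eq_same, Pi.single_eq_same]
            · rw [Pi.single_eq_of_ne hkj 1,
                Pi.single_eq_of_ne (fun h => hkj ((hpp k j).mp h)) 1]
        · intro hk2
          simp only [Prod.fst_add, Prod.snd_add, ee, ff, Pi.add_apply, Pi.zero_apply,
            add_zero, zero_add]
          constructor
          · exact Pi.single_eq_of_ne (fin_ne (by
              have := hpge j hj; simp only [coe_partner] at *; omega)) 1
          · exact Pi.single_eq_of_ne (fin_ne (by omega)) 1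
      · constructor
        · intro k _; simp
        · intro m _ _; simp
      · intro x y _ _ hx hy
        constructor
        · intro k hk
          have h1 := (hx.1 k hk); have h2 := (hy.1 k hk)
          simp only [Prod.fst_add, Prod.snd_add, Pi.add_apply]
          exact ⟨by rw [h1.1, h2.1], by rw [h1.2, h2.2]⟩
        · intro m hm1 hm2
          have h1 := (hx.2 m hm1 hm2); have h2 := (hy.2 m hm1 hm2)
          simp only [Prod.fst_add, Prod.snd_add, Pi.add_apply]
          exact ⟨by rw [h1.1, h2.1, add_zero], by rw [h1.2, h2.2, add_zero]⟩
      · intro c x _ hx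
        constructor
        · intro k hk
          have h1 := (hx.1 k hk)
          simp only [Prod.smul_fst, Prod.smul_snd, Pi.smul_apply, smul_eq_mul]
          exact ⟨by rw [h1.1], by rw [h1.2]⟩
        · intro m hm1 hm2
          have h1 := (hx.2 m hm1 hm2)
          simp only [Prod.smul_fst, Prod.smul_snd, Pi.smul_apply, smul_eq_mul]
          exact ⟨by rw [h1.1, mul_zero], by rw [h1.2, mul_zero]⟩
    have hA := (key v hv).1
    have hB := (key v hv).2
    -- the two families of linear relations coming from `hall`
    have e1 : ∀ j : Fin n, (j : ℕ) < i → v.2 j + v.1 (partner j) = 0 := by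
      intro j hj
      have hmem : ee j + ff (partner j) ∈ span K (genSet K n i) :=
        Submodule.subset_span ⟨j, hj, Or.inl rfl⟩
      have h0 := hall _ hmem
      rw [homology_pair1 j (partner j) hj (hpge j hj)] at h0
      rw [sform_add_right, sform_neg_right, sform_ee_right, sform_ff_right] at h0
      linear_combination h0
    have e2 : ∀ j : Fin n, (j : ℕ) < i → v.2 (partner j) + v.1 j = 0 := by
      intro j hj
      have hmem : ee (partner j) + ff j ∈ span K (genSet K n i) :=
        Submodule.subset_span ⟨j, hj, Or.inr rfl⟩
      have h0 := hall _ hmem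
      rw [homology_pair2 j (partner j) hj (hpge j hj)] at h0
      rw [sform_add_right, sform_neg_right, sform_ee_right, sform_ff_right] at h0
      linear_combination -h0
    have hzero : ∀ j : Fin n, (j : ℕ) < i →
        v.1 j = 0 ∧ v.2 j = 0 ∧ v.1 (partner j) = 0 ∧ v.2 (partner j) = 0 := by
      intro j hj
      have a1 := (hA j hj).1  -- v.1 j = v.2 (partner j)
      have a2 := (hA j hj).2  -- v.2 j = v.1 (partner j)
      have he1 := e1 j hj
      have he2 := e2 j hj
      have h2a : 2 * v.1 j = 0 := by linear_combination he2 + a1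
      have h2b : 2 * v.2 j = 0 := by linear_combination he1 + a2
      have hv1 : v.1 j = 0 := by
        rcases mul_eq_zero.mp h2a with h | h
        · exact absurd h hchar
        · exact h
      have hv2 : v.2 j = 0 := by
        rcases mul_eq_zero.mp h2b with h | h
        · exact absurd h hchar
        · exact h
      exact ⟨hv1, hv2, by rw [← a2, hv2], by rw [← a1, hv1]⟩
    -- conclude v = 0
    refine Prod.ext ?_ ?_ <;> funext m <;>
      (by_cases hm1 : (m : ℕ) < i
       · first
         | exact (hzero m hm1).1
         | exact (hzero m hm1).2.1
       · by_cases hm2 : (m : ℕ) < n - i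
         · first
           | exact (hB m (by omega) hm2).1
           | exact (hB m (by omega) hm2).2
         · have hmn := m.isLt
           have hji : (n - 1 - (m : ℕ)) < i := by omega
           set j : Fin n := ⟨n - 1 - (m : ℕ), by omega⟩ with hjdef
           have hpm : partner j = m := Fin.ext (by simp only [coe_partner, hjdef]; omega)
           first
           | (rw [← hpm]; exact (hzero j hji).2.2.1)
           | (rw [← hpm]; exact (hzero j hji).2.2.2))
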